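/- s_ℝ(K) ≥ 2 (i.e., there exists an m×2 matrix over 𝔽₂ satisfying condition (A2) for K) if and only if condition (S2) holds: either (1) there exist pairwise distinct τ₁, τ₂, τ₃ ∈ N(K) with τ₁ ∩ τ₂ ∩ τ₃ = ∅, or (2) there exist distinct τ₁, τ₂ ∈ N(K) with τ₁ ∩ τ₂ = ∅. -/

import Mathlib

/-- `K` is an abstract simplicial complex on the vertex set `[m]`:
it contains the empty set and is closed under taking subsets. -/
def IsSimplicialComplex (m : ℕ) (K : Set (Finset (Fin m))) : Prop :=
  ∅ ∈ K ∧ ∀ σ ∈ K, ∀ τ ⊆ σ, τ ∈ K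

/-- `ω` is a minimal non-simplex of `K`: `ω ∉ K` but every proper subset of `ω` is in `K`. -/
def MinimalNonSimplex (m : ℕ) (K : Set (Finset (Fin m))) (ω : Finset (Fin m)) : Prop :=
  ω ∉ K ∧ ∀ τ ⊂ ω, τ ∈ K

/-- Condition (A): for every simplex `σ ∈ K` the rows `{Sⁱ : i ∉ σ}`
generate `ℤᵏ` as an abelian group. -/
def CondA (m k : ℕ) (K : Set (Finset (Fin m))) (S : Matrix (Fin m) (Fin k) ℤ) : Prop :=
  ∀ σ ∈ K, Submodule.span ℤ ((fun i => S i) '' {i : Fin m | i ∉ σ}) = ⊤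

/-- Condition (A2): for every simplex `σ ∈ K` the rows `{Sⁱ : i ∉ σ}` span `𝔽₂ᵏ`. -/
def CondA2 (m k : ℕ) (K : Set (Finset (Fin m))) (S : Matrix (Fin m) (Fin k) (ZMod 2)) : Prop :=
  ∀ σ ∈ K, Submodule.span (ZMod 2) ((fun i => S i) '' {i : Fin m | i ∉ σ}) = ⊤

/-- Condition (S2): `N(K)` contains two disjoint elements, or three pairwise distinct
elements with empty common intersection. -/
def CondS2 (m : ℕ) (K : Set (Finset (Fin m))) : Prop :=
  (∃ τ₁ τ₂ τ₃ : Finset (Fin m), MinimalNonSimplex m K τ₁ ∧ MinimalNonSimplex m K τ₂ ∧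
    MinimalNonSimplex m K τ₃ ∧ τ₁ ≠ τ₂ ∧ τ₁ ≠ τ₃ ∧ τ₂ ≠ τ₃ ∧ τ₁ ∩ τ₂ ∩ τ₃ = ∅) ∨
  (∃ τ₁ τ₂ : Finset (Fin m), MinimalNonSimplex m K τ₁ ∧ MinimalNonSimplex m K τ₂ ∧
    τ₁ ≠ τ₂ ∧ τ₁ ∩ τ₂ = ∅)

/-- Condition (S3): `N(K)` contains one of five configurations of pairwise distinct
elements described in Proposition (S3). -/
def CondS3 (m : ℕ) (K : Set (Finset (Fin m))) : Prop :=
  (∃ τ₁ τ₂ τ₃ τ₄ τ₅ τ₆ τ₇ : Finset (Fin m),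
    (∀ τ ∈ [τ₁, τ₂, τ₃, τ₄, τ₅, τ₆, τ₇], MinimalNonSimplex m K τ) ∧
    [τ₁, τ₂, τ₃, τ₄, τ₅, τ₆, τ₇].Pairwise (· ≠ ·) ∧
    τ₁ ∩ τ₂ ∩ τ₄ = ∅ ∧ τ₁ ∩ τ₃ ∩ τ₅ = ∅ ∧ τ₁ ∩ τ₆ ∩ τ₇ = ∅ ∧
    τ₂ ∩ τ₃ ∩ τ₆ = ∅ ∧ τ₂ ∩ τ₅ ∩ τ₇ = ∅ ∧ τ₃ ∩ τ₄ ∩ τ₇ = ∅ ∧ τ₄ ∩ τ₅ ∩ τ₆ = ∅) ∨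
  (∃ τ₁ τ₂ τ₃ τ₄ τ₅ τ₆ : Finset (Fin m),
    (∀ τ ∈ [τ₁, τ₂, τ₃, τ₄, τ₅, τ₆], MinimalNonSimplex m K τ) ∧
    [τ₁, τ₂, τ₃, τ₄, τ₅, τ₆].Pairwise (· ≠ ·) ∧
    τ₁ ∩ τ₃ = ∅ ∧ τ₁ ∩ τ₂ ∩ τ₄ = ∅ ∧ τ₁ ∩ τ₂ ∩ τ₅ = ∅ ∧
    τ₁ ∩ τ₄ ∩ τ₆ = ∅ ∧ τ₁ ∩ τ₅ ∩ τ₆ = ∅ ∧ τ₂ ∩ τ₃ ∩ τ₆ = ∅ ∧ τ₃ ∩ τ₄ ∩ τ₅ = ∅) ∨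
  (∃ τ₁ τ₂ τ₃ τ₄ τ₅ : Finset (Fin m),
    (∀ τ ∈ [τ₁, τ₂, τ₃, τ₄, τ₅], MinimalNonSimplex m K τ) ∧
    [τ₁, τ₂, τ₃, τ₄, τ₅].Pairwise (· ≠ ·) ∧
    τ₁ ∩ τ₂ = ∅ ∧ τ₁ ∩ τ₅ = ∅ ∧ τ₁ ∩ τ₃ ∩ τ₄ = ∅ ∧
    τ₂ ∩ τ₃ ∩ τ₅ = ∅ ∧ τ₂ ∩ τ₄ ∩ τ₅ = ∅) ∨
  (∃ τ₁ τ₂ τ₃ τ₄ : Finset (Fin m),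
    (∀ τ ∈ [τ₁, τ₂, τ₃, τ₄], MinimalNonSimplex m K τ) ∧
    [τ₁, τ₂, τ₃, τ₄].Pairwise (· ≠ ·) ∧
    τ₁ ∩ (τ₂ ∪ τ₃ ∪ τ₄) = ∅ ∧ τ₂ ∩ τ₃ ∩ τ₄ = ∅) ∨
  (∃ τ₁ τ₂ τ₃ : Finset (Fin m),
    (∀ τ ∈ [τ₁, τ₂, τ₃], MinimalNonSimplex m K τ) ∧
    [τ₁, τ₂, τ₃].Pairwise (· ≠ ·) ∧
    τ₁ ∩ τ₂ = ∅ ∧ τ₁ ∩ τ₃ = ∅ ∧ τ₂ ∩ τ₃ = ∅)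

namespace Stmt11Aux

def vv : Fin 3 → (Fin 2 → ZMod 2) := ![![1,0],![0,1],![1,1]]

lemma vv_ne_zero : ∀ j, vv j ≠ 0 := by decide
lemma vv_inj : ∀ j k, vv j = vv k → j = k := by decide
lemma decomp : ∀ v w u : Fin 2 → ZMod 2, v ≠ 0 → w ≠ 0 → v ≠ w →
    ∃ a b : ZMod 2, u = a • v + b • w := by decide
lemma not_all : ∀ v : Fin 2 → ZMod 2, ∃ u, ∀ a : ZMod 2, u ≠ a • v := by decide
lemma all_vals : ∀ u : Fin 2 → ZMod 2, u = 0 ∨ u = vv 0 ∨ u = vv 1 ∨ u = vv 2 := by decide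

lemma span_pair_top {v w : Fin 2 → ZMod 2} (hv : v ≠ 0) (hw : w ≠ 0) (hvw : v ≠ w)
    {X : Set (Fin 2 → ZMod 2)} (hvX : v ∈ X) (hwX : w ∈ X) :
    Submodule.span (ZMod 2) X = ⊤ := by
  rw [eq_top_iff]
  intro u _
  obtain ⟨a, b, hab⟩ := decomp v w u hv hw hvw
  rw [hab]
  exact Submodule.add_mem _ (Submodule.smul_mem _ _ (Submodule.subset_span hvX))
    (Submodule.smul_mem _ _ (Submodule.subset_span hwX))

lemma span_sub_single_ne_top {v : Fin 2 → ZMod 2} {X : Set (Fin 2 → ZMod 2)}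
    (hX : ∀ x ∈ X, x = 0 ∨ x = v) : Submodule.span (ZMod 2) X ≠ ⊤ := by
  obtain ⟨u, hu⟩ := not_all v
  intro htop
  have hle : Submodule.span (ZMod 2) X ≤ Submodule.span (ZMod 2) {v} := by
    rw [Submodule.span_le]
    intro x hx
    rcases hX x hx with h | h
    · simp [h]
    · exact h ▸ Submodule.subset_span rfl
  have hmem : u ∈ Submodule.span (ZMod 2) {v} := hle (htop ▸ Submodule.mem_top)
  rw [Submodule.mem_span_singleton] at hmem
  obtain ⟨a, ha⟩ := hmem
  exact hu a ha.symm

lemma exists_mns {m : ℕ} {K : Set (Finset (Fin m))} :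
    ∀ ω : Finset (Fin m), ω ∉ K → ∃ τ, τ ⊆ ω ∧ MinimalNonSimplex m K τ := by
  intro ω
  induction ω using Finset.strongInductionOn with
  | _ ω ih =>
    intro hω
    by_cases h : ∀ τ ⊂ ω, τ ∈ K
    · exact ⟨ω, subset_rfl, hω, h⟩
    · push_neg at h
      obtain ⟨τ', hsub, hτ'⟩ := h
      obtain ⟨τ, h1, h2⟩ := ih τ' hsub hτ'
      exact ⟨τ, h1.trans hsub.subset, h2⟩

lemma condA2_of_coloring {m : ℕ} {K : Set (Finset (Fin m))} (hK : IsSimplicialComplex m K)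
    (τ : Fin 3 → Finset (Fin m)) (hτ : ∀ j, τ j ∉ K)
    (c : Fin m → Fin 3) (hc : ∀ j, ∀ i ∈ τ j, c i ≠ j) :
    ∃ S : Matrix (Fin m) (Fin 2) (ZMod 2), CondA2 m 2 K S := by
  refine ⟨fun i => vv (c i), ?_⟩
  intro σ hσ
  by_contra hne
  have hsame : ∀ i₁ ∉ σ, ∀ i₂ ∉ σ, c i₁ = c i₂ := by
    intro i₁ h₁ i₂ h₂
    by_contra hcc
    exact hne (span_pair_top (vv_ne_zero _) (vv_ne_zero _)
      (fun h => hcc (vv_inj _ _ h)) ⟨i₁, h₁, rfl⟩ ⟨i₂, h₂, rfl⟩)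
  by_cases hex : ∃ i, i ∉ σ
  · obtain ⟨i₀, hi₀⟩ := hex
    refine hτ (c i₀) (hK.2 σ hσ (τ (c i₀)) ?_)
    intro i hi
    by_contra hiσ
    exact hc (c i₀) i hi (hsame i hiσ i₀ hi₀)
  · push_neg at hex
    exact hτ 0 (hK.2 σ hσ (τ 0) (fun i _ => hex i))

end Stmt11Aux

open Stmt11Aux in
/-- `s_ℝ(K) ≥ 2` iff condition (S2) holds. -/
theorem stmt_11 (m : ℕ) (K : Set (Finset (Fin m))) (hK : IsSimplicialComplex m K) :
    (∃ S : Matrix (Fin m) (Fin 2) (ZMod 2), CondA2 m 2 K S) ↔ CondS2 m K := by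
  constructor
  · rintro ⟨S, hS⟩
    -- the sets of rows avoiding value 0 and vv j
    classical
    have hBK : ∀ j : Fin 3, (Finset.univ.filter (fun i => S i ≠ 0 ∧ S i ≠ vv j)) ∉ K := by
      intro j hj
      refine span_sub_single_ne_top (v := vv j) ?_ (hS _ hj)
      rintro x ⟨i, hi, rfl⟩
      simp only [Set.mem_setOf_eq, Finset.mem_filter, Finset.mem_univ, true_and,
        not_and_or, not_not] at hi
      exact hi
    obtain ⟨t0, ht0sub, ht0⟩ := exists_mns _ (hBK 0)
    obtain ⟨t1, ht1sub, ht1⟩ := exists_mns _ (hBK 1)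
    obtain ⟨t2, ht2sub, ht2⟩ := exists_mns _ (hBK 2)
    have hv0 : ∀ i ∈ t0, S i ≠ 0 ∧ S i ≠ vv 0 := by
      intro i hi
      have := ht0sub hi; simpa using this
    have hv1 : ∀ i ∈ t1, S i ≠ 0 ∧ S i ≠ vv 1 := by
      intro i hi
      have := ht1sub hi; simpa using this
    have hv2 : ∀ i ∈ t2, S i ≠ 0 ∧ S i ≠ vv 2 := by
      intro i hi
      have := ht2sub hi; simpa using this
    have hne : ∀ τ : Finset (Fin m), MinimalNonSimplex m K τ → τ ≠ ∅ := by
      intro τ hτ h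
      exact hτ.1 (h ▸ hK.1)
    by_cases h01 : t0 = t1
    · -- t0 rows forced to vv 2, disjoint from t2
      have hdisj : t0 ∩ t2 = ∅ := by
        ext i
        simp only [Finset.mem_inter, Finset.notMem_empty, iff_false, not_and]
        intro hi0 hi2
        rcases all_vals (S i) with h | h | h | h
        · exact (hv0 i hi0).1 h
        · exact (hv0 i hi0).2 h
        · exact (hv1 i (h01 ▸ hi0)).2 h
        · exact (hv2 i hi2).2 h
      have hne02 : t0 ≠ t2 := by
        intro h
        apply hne t2 ht2
        rw [h, Finset.inter_self] at hdisj
        exact hdisj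
      exact Or.inr ⟨t0, t2, ht0, ht2, hne02, hdisj⟩
    · by_cases h02 : t0 = t2
      · -- t0 rows forced to vv 1, disjoint from t1
        have hdisj : t0 ∩ t1 = ∅ := by
          ext i
          simp only [Finset.mem_inter, Finset.notMem_empty, iff_false, not_and]
          intro hi0 hi1
          rcases all_vals (S i) with h | h | h | h
          · exact (hv0 i hi0).1 h
          · exact (hv0 i hi0).2 h
          · exact (hv1 i hi1).2 h
          · exact (hv2 i (h02 ▸ hi0)).2 h
        exact Or.inr ⟨t0, t1, ht0, ht1, h01, hdisj⟩
      · by_cases h12 : t1 = t2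
        · -- t1 rows forced to vv 0, disjoint from t0
          have hdisj : t0 ∩ t1 = ∅ := by
            ext i
            simp only [Finset.mem_inter, Finset.notMem_empty, iff_false, not_and]
            intro hi0 hi1
            rcases all_vals (S i) with h | h | h | h
            · exact (hv0 i hi0).1 h
            · exact (hv0 i hi0).2 h
            · exact (hv1 i hi1).2 h
            · exact (hv2 i (h12 ▸ hi1)).2 h
          exact Or.inr ⟨t0, t1, ht0, ht1, h01, hdisj⟩
        · -- all distinct: triple intersection empty
          refine Or.inl ⟨t0, t1, t2, ht0, ht1, ht2, h01, h02, h12, ?_⟩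
          ext i
          simp only [Finset.mem_inter, Finset.notMem_empty, iff_false, not_and]
          intro hi0 hi2
          rcases all_vals (S i) with h | h | h | h
          · exact (hv0 i hi0.1).1 h
          · exact (hv0 i hi0.1).2 h
          · exact (hv1 i hi0.2).2 h
          · exact (hv2 i hi2).2 h
  · rintro (⟨τ₁, τ₂, τ₃, h1, h2, h3, _, _, _, hint⟩ | ⟨τ₁, τ₂, h1, h2, _, hint⟩)
    · refine condA2_of_coloring hK ![τ₁, τ₂, τ₃]
        (fun j => by fin_cases j <;> [exact h1.1; exact h2.1; exact h3.1])
        (fun i => if i ∉ τ₁ then 0 else if i ∉ τ₂ then 1 else 2) ?_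
      intro j i hi
      have htri : ¬(i ∈ τ₁ ∧ i ∈ τ₂ ∧ i ∈ τ₃) := by
        rintro ⟨a, b, c⟩
        have : i ∈ τ₁ ∩ τ₂ ∩ τ₃ := by simp [a, b, c]
        simp [hint] at this
      fin_cases j <;> simp only [Matrix.cons_val_zero, Matrix.cons_val_one, Matrix.head_cons,
        Matrix.cons_val_two, Matrix.tail_cons] at hi ⊢ <;> split_ifs with p q <;>
        first
        | decide
        | tauto
    · refine condA2_of_coloring hK ![τ₁, τ₂, τ₁]
        (fun j => by fin_cases j <;> [exact h1.1; exact h2.1; exact h1.1])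
        (fun i => if i ∈ τ₁ then 1 else 0) ?_
      intro j i hi
      have hdisj : ¬(i ∈ τ₁ ∧ i ∈ τ₂) := by
        rintro ⟨a, b⟩
        have : i ∈ τ₁ ∩ τ₂ := by simp [a, b]
        simp [hint] at this
      fin_cases j <;> simp only [Matrix.cons_val_zero, Matrix.cons_val_one, Matrix.head_cons,
        Matrix.cons_val_two, Matrix.tail_cons] at hi ⊢ <;> split_ifs with p <;>
        first
        | decide
        | tauto
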